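/- Let t ∈ ℂ with Re t > 0. Then the function x ↦ x^(t−1) · (1 + x²)^(−t) is integrable on (0, ∞) with respect to Lebesgue measure, and ∫_{0}^{∞} x^(t−1) · (1 + x²)^(−t) dx = Γ(t/2)² / (2·Γ(t)). Equivalently, 2·∫_{0}^{∞} (x/(1+x²))^t · x⁻¹ dx = Γ(t/2)²/Γ(t) = B(t/2, t/2), where B is the Beta function. -/

import Mathlib

open MeasureTheory Set

lemma aux_cpow_div_ofReal (p q : ℝ) (hp : 0 ≤ p) (hq : 0 < q) (s : ℂ) :
    ((p / q : ℝ) : ℂ) ^ s = (p : ℂ) ^ s * ((q : ℂ) ^ s)⁻¹ := by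
  rw [div_eq_mul_inv, Complex.ofReal_mul, Complex.ofReal_inv,
    ← Complex.ofReal_inv,
    Complex.mul_cpow_ofReal_nonneg hp (inv_nonneg.mpr hq.le),
    Complex.ofReal_inv, Complex.inv_cpow]
  rw [Complex.arg_ofReal_of_nonneg hq.le]
  exact Real.pi_ne_zero.symm

lemma aux_cpow_sq (x : ℝ) (hx : 0 < x) (s : ℂ) :
    ((x : ℂ) ^ (2 : ℕ)) ^ s = (x : ℂ) ^ (2 * s) := by
  rw [show ((2 : ℂ) * s) = ((2 : ℕ) : ℂ) * s by norm_num,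
    Complex.cpow_nat_mul' (n := 2)] <;>
    rw [Complex.arg_ofReal_of_nonneg hx.le] <;> norm_num [Real.pi_pos, Real.pi_nonneg]

theorem integral_rpow_one_add_sq_eq_beta (t : ℂ) (ht : 0 < t.re) :
    IntegrableOn
      (fun x : ℝ => (x : ℂ) ^ (t - 1) * ((1 : ℂ) + (x : ℂ) ^ 2) ^ (-t)) (Ioi 0) ∧
    (∫ x in Ioi (0 : ℝ), (x : ℂ) ^ (t - 1) * ((1 : ℂ) + (x : ℂ) ^ 2) ^ (-t)) =
      Complex.Gamma (t / 2) ^ 2 / (2 * Complex.Gamma t) ∧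
    2 * (∫ x in Ioi (0 : ℝ), ((x : ℂ) / (1 + (x : ℂ) ^ 2)) ^ t * (x : ℂ)⁻¹) =
      Complex.Gamma (t / 2) ^ 2 / Complex.Gamma t := by
  have ht2 : 0 < (t / 2).re := by
    rw [show t / 2 = t * (↑(2⁻¹ : ℝ)) by push_cast; ring, Complex.mul_re]
    simp
    linarith
  set f : ℝ → ℝ := fun x => x ^ 2 / (1 + x ^ 2) with hf_def
  set f' : ℝ → ℝ := fun x => 2 * x / (1 + x ^ 2) ^ 2 with hf'_def
  set g : ℝ → ℂ := fun v => (v : ℂ) ^ (t / 2 - 1) * ((1 : ℂ) - v) ^ (t / 2 - 1) with hg_def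
  have hb : ∀ x : ℝ, 0 < 1 + x ^ 2 := fun x => by positivity
  have hf' : ∀ x ∈ Ioi (0 : ℝ), HasDerivWithinAt f (f' x) (Ioi 0) x := by
    intro x hx
    have h1 : HasDerivAt (fun y : ℝ => y ^ 2) (2 * x) x := by
      simpa using hasDerivAt_pow 2 x
    have h2 : HasDerivAt (fun y : ℝ => 1 + y ^ 2) (2 * x) x := h1.const_add 1
    have h3 := h1.div h2 (hb x).ne'
    have hnum : 2 * x * (1 + x ^ 2) - x ^ 2 * (2 * x) = 2 * x := by ring
    rw [hnum] at h3
    exact h3.hasDerivWithinAt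
  have hinj : InjOn f (Ioi 0) := by
    intro x hx y hy h
    simp only [hf_def] at h
    rw [div_eq_div_iff (hb x).ne' (hb y).ne'] at h
    have hx' : (0:ℝ) < x := hx
    have hy' : (0:ℝ) < y := hy
    nlinarith [sq_nonneg (x - y), sq_nonneg (x + y)]
  have himg : f '' Ioi 0 = Ioo 0 1 := by
    ext v
    constructor
    · rintro ⟨x, hx, rfl⟩
      have hx' : (0:ℝ) < x := hx
      constructor
      · positivity
      · rw [div_lt_one (hb x)]; nlinarith
    · rintro ⟨hv0, hv1⟩
      have h1v : (0:ℝ) < 1 - v := by linarith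
      refine ⟨Real.sqrt (v / (1 - v)), ?_, ?_⟩
      · exact Real.sqrt_pos.mpr (div_pos hv0 h1v)
      · simp only [hf_def]
        rw [Real.sq_sqrt (div_pos hv0 h1v).le]
        field_simp
        ring
  -- key pointwise identity on Ioi 0
  have key : ∀ x ∈ Ioi (0:ℝ),
      |f' x| • g (f x) = 2 * ((x : ℂ) ^ (t - 1) * ((1 : ℂ) + (x : ℂ) ^ 2) ^ (-t)) := by
    intro x hx
    have hx' : (0:ℝ) < x := hx
    have hxc : (x : ℂ) ≠ 0 := Complex.ofReal_ne_zero.mpr hx'.ne'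
    have hbx := hb x
    have hbc : ((1 : ℂ) + (x : ℂ) ^ 2) = ((1 + x ^ 2 : ℝ) : ℂ) := by push_cast; ring
    have hbc0 : ((1 + x ^ 2 : ℝ) : ℂ) ≠ 0 := Complex.ofReal_ne_zero.mpr hbx.ne'
    have habs : |f' x| = 2 * x / (1 + x ^ 2) ^ 2 := abs_of_pos (by positivity)
    have h1f : (1 : ℂ) - ((f x : ℝ) : ℂ) = ((1 / (1 + x ^ 2) : ℝ) : ℂ) := by
      rw [← Complex.ofReal_one, ← Complex.ofReal_sub]
      congr 1
      simp only [hf_def]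
      field_simp
      ring
    have e1 : (x : ℂ) ^ (t - 1) = (x : ℂ) ^ (2 * (t / 2 - 1)) * (x : ℂ) := by
      have h := (Complex.cpow_add (x := (x : ℂ)) (2 * (t / 2 - 1)) 1 hxc).symm
      rw [Complex.cpow_one] at h
      rw [h, show 2 * (t / 2 - 1) + 1 = t - 1 by ring]
    have e2 : ((1 + x ^ 2 : ℝ) : ℂ) ^ (-t) =
        (((1 + x ^ 2 : ℝ) : ℂ) ^ (t / 2 - 1))⁻¹ * (((1 + x ^ 2 : ℝ) : ℂ) ^ (t / 2 - 1))⁻¹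
          * (((1 + x ^ 2 : ℝ) : ℂ) ^ (2 : ℕ))⁻¹ := by
      rw [← mul_inv, ← Complex.cpow_add _ _ hbc0, ← Complex.cpow_natCast, ← mul_inv,
        ← Complex.cpow_add _ _ hbc0, ← Complex.cpow_neg]
      congr 1; push_cast; ring
    simp only [hg_def, habs, h1f]
    rw [show (f x : ℂ) = ((x ^ 2 / (1 + x ^ 2) : ℝ) : ℂ) from rfl]
    rw [aux_cpow_div_ofReal _ _ (by positivity) hbx,
        aux_cpow_div_ofReal _ _ (by norm_num) hbx,
        Complex.ofReal_pow, aux_cpow_sq x hx', Complex.ofReal_one, Complex.one_cpow,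
        Complex.real_smul]
    have hcast : ((2 * x / (1 + x ^ 2) ^ 2 : ℝ) : ℂ)
        = 2 * (x : ℂ) * ((((1 + x ^ 2 : ℝ) : ℂ)) ^ (2 : ℕ))⁻¹ := by
      push_cast; field_simp
    rw [hcast, hbc, e1, e2]
    ring
  have hmes : MeasurableSet (Ioi (0:ℝ)) := measurableSet_Ioi
  have hbeta_int : IntegrableOn g (Ioo 0 1) := by
    have := Complex.betaIntegral_convergent ht2 ht2
    rw [intervalIntegrable_iff_integrableOn_Ioc_of_le zero_le_one] at this
    exact this.mono_set Ioo_subset_Ioc_self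
  have hint_iff := integrableOn_image_iff_integrableOn_abs_deriv_smul hmes hf' hinj g
  rw [himg] at hint_iff
  have hint2 : IntegrableOn (fun x => |f' x| • g (f x)) (Ioi 0) := hint_iff.mp hbeta_int
  have hint3 : IntegrableOn
      (fun x : ℝ => 2 * ((x : ℂ) ^ (t - 1) * ((1 : ℂ) + (x : ℂ) ^ 2) ^ (-t))) (Ioi 0) :=
    hint2.congr_fun key hmes
  have hIntegrable : IntegrableOn
      (fun x : ℝ => (x : ℂ) ^ (t - 1) * ((1 : ℂ) + (x : ℂ) ^ 2) ^ (-t)) (Ioi 0) := by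
    have h2' := hint3.const_mul (2⁻¹ : ℂ)
    simpa [← mul_assoc, IntegrableOn] using h2'
  have hval : (∫ v in Ioo (0:ℝ) 1, g v) =
      2 * ∫ x in Ioi (0:ℝ), (x : ℂ) ^ (t - 1) * ((1 : ℂ) + (x : ℂ) ^ 2) ^ (-t) := by
    rw [← himg, integral_image_eq_integral_abs_deriv_smul hmes hf' hinj g,
      setIntegral_congr_fun hmes key, integral_const_mul]
  have hbeta_val : (∫ v in Ioo (0:ℝ) 1, g v) = Complex.betaIntegral (t/2) (t/2) := by
    rw [← integral_Ioc_eq_integral_Ioo, Complex.betaIntegral,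
      intervalIntegral.integral_of_le zero_le_one]
  have hGamma : Complex.Gamma (t/2) ^ 2 = Complex.Gamma t * Complex.betaIntegral (t/2) (t/2) := by
    have h := Complex.Gamma_mul_Gamma_eq_betaIntegral ht2 ht2
    rw [show t/2 + t/2 = t by ring] at h
    rw [sq]; exact h
  have hGt : Complex.Gamma t ≠ 0 := Complex.Gamma_ne_zero_of_re_pos ht
  have hI : (∫ x in Ioi (0 : ℝ), (x : ℂ) ^ (t - 1) * ((1 : ℂ) + (x : ℂ) ^ 2) ^ (-t)) =
      Complex.Gamma (t / 2) ^ 2 / (2 * Complex.Gamma t) := by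
    have h1 : Complex.betaIntegral (t/2) (t/2) =
        2 * ∫ x in Ioi (0:ℝ), (x : ℂ) ^ (t - 1) * ((1 : ℂ) + (x : ℂ) ^ 2) ^ (-t) := by
      rw [← hbeta_val, hval]
    rw [hGamma, h1]
    field_simp
  refine ⟨hIntegrable, hI, ?_⟩
  have heq2 : ∀ x ∈ Ioi (0:ℝ),
      ((x : ℂ) / (1 + (x : ℂ) ^ 2)) ^ t * (x : ℂ)⁻¹ =
      (x : ℂ) ^ (t - 1) * ((1 : ℂ) + (x : ℂ) ^ 2) ^ (-t) := by
    intro x hx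
    have hx' : (0:ℝ) < x := hx
    have hxc : (x : ℂ) ≠ 0 := Complex.ofReal_ne_zero.mpr hx'.ne'
    have hbx := hb x
    have hbase : ((x : ℂ) / (1 + (x : ℂ) ^ 2)) = ((x / (1 + x ^ 2) : ℝ) : ℂ) := by
      push_cast; ring
    have hbc : ((1 + x ^ 2 : ℝ) : ℂ) = (1 : ℂ) + (x : ℂ) ^ 2 := by push_cast; ring
    have hxt : (x : ℂ)⁻¹ = (x : ℂ) ^ (-1 : ℂ) := by
      rw [Complex.cpow_neg, Complex.cpow_one]
    rw [hbase, aux_cpow_div_ofReal _ _ hx'.le hbx, ← Complex.cpow_neg, hbc,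
      mul_right_comm, hxt, ← Complex.cpow_add _ _ hxc,
      show t + (-1 : ℂ) = t - 1 by ring]
  rw [setIntegral_congr_fun hmes heq2, hI]
  rw [eq_div_iff hGt]
  field_simp
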